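/- arXiv:2502.16827 — 3 statements merged into one kernel-verified Lean document; each statement's English description precedes it below -/
import Mathlib

section
/- Let A be an m x n random matrix whose columns A_i are independent, mean-zero, subgaussian random vectors with ||A_i||_2 = 1 almost surely and ||A_i||_{psi_2} <= K. For any unit vector x, the random variable S = ||Ax||_2^2 - 1 satisfies the MGF bound E exp(lambda*S) <= exp(C*lambda^2*K^2) for all |lambda| <= c/K^2, where C, c > 0 are absolute constants. -/
open MeasureTheory ProbabilityTheory Real
open scoped BigOperators ENNReal

/-- The subgaussian (psi_2) norm of a real random variable. -/
noncomputable def psi2 {Ω : Type*} [MeasurableSpace Ω] (μ : Measure Ω) (Z : Ω → ℝ) : ℝ :=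
  sInf {t : ℝ | 0 < t ∧ ∫ ω, Real.exp (Z ω ^ 2 / t ^ 2) ∂μ ≤ 2}

/-- A real random variable is subgaussian. -/
def Subgaussian {Ω : Type*} [MeasurableSpace Ω] (μ : Measure Ω) (Z : Ω → ℝ) : Prop :=
  ∃ t : ℝ, 0 < t ∧ ∫ ω, Real.exp (Z ω ^ 2 / t ^ 2) ∂μ ≤ 2

/-- The subgaussian norm of a random vector: sup of marginal subgaussian norms. -/
noncomputable def vpsi2 {Ω : Type*} [MeasurableSpace Ω] (μ : Measure Ω) {m : ℕ}
    (V : Ω → EuclideanSpace ℝ (Fin m)) : ℝ :=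
  ⨆ u : {u : EuclideanSpace ℝ (Fin m) // ‖u‖ = 1},
    psi2 μ (fun ω => (inner ℝ (V ω) (u : EuclideanSpace ℝ (Fin m)) : ℝ))

/-- A random vector is subgaussian: a uniform witness over all directions. -/
def SubgaussianVec {Ω : Type*} [MeasurableSpace Ω] (μ : Measure Ω) {m : ℕ}
    (V : Ω → EuclideanSpace ℝ (Fin m)) : Prop :=
  ∃ t : ℝ, 0 < t ∧ ∀ u : EuclideanSpace ℝ (Fin m), ‖u‖ = 1 →
    ∫ ω, Real.exp ((inner ℝ (V ω) u : ℝ) ^ 2 / t ^ 2) ∂μ ≤ 2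

/-- `e^x ≤ x + e^{x²}` for all real `x`. -/
lemma exp_le_add_exp_sq (x : ℝ) : Real.exp x ≤ x + Real.exp (x ^ 2) := by
  rcases le_or_gt |x| 1 with h | h
  · have h2 := Real.exp_bound h (n := 2) (by norm_num)
    have h3 : Real.exp x ≤ x ^ 2 * (3 / (2*2)) + (1 + x) := by
      simpa [Finset.sum_range_succ] using (abs_le.mp h2).2
    have h4 : (1 : ℝ) + x ^ 2 ≤ Real.exp (x ^ 2) := by
      have := Real.add_one_le_exp (x ^ 2); linarith
    nlinarith [sq_nonneg x]
  · rcases le_or_gt 0 x with hx | hx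
    · have h1 : x ≤ x ^ 2 := by nlinarith [abs_of_nonneg hx]
      have := Real.exp_le_exp.mpr h1
      linarith
    · have h1 : Real.exp x ≤ 1 := Real.exp_le_one_iff.mpr hx.le
      have h2 : 1 - x ≤ Real.exp (x ^ 2) := by
        have hxx : -x ≤ x ^ 2 := by nlinarith [abs_of_neg hx]
        have := Real.add_one_le_exp (-x)
        have := Real.exp_le_exp.mpr hxx
        linarith
      linarith

/-- convexity interpolation for exp -/
lemma exp_interp {θ X : ℝ} (hθ0 : 0 ≤ θ) (hθ1 : θ ≤ 1) :
    Real.exp (θ * X) ≤ (1 - θ) + θ * Real.exp X := by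
  have := convexOn_exp.2 (Set.mem_univ (0:ℝ)) (Set.mem_univ X)
    (by linarith : (0:ℝ) ≤ 1 - θ) hθ0 (by ring)
  simpa using this

variable {Ω : Type*} [MeasurableSpace Ω]

/-- MGF bound for a mean-zero variable with `∫ e^{Z²/t²} ≤ 2`, `|Z| ≤ 1` a.s. -/
lemma scalar_mgf (μ : Measure Ω) [IsProbabilityMeasure μ] (Z : Ω → ℝ)
    (hZm : Measurable Z) (hZ1 : ∀ᵐ ω ∂μ, |Z ω| ≤ 1) {t : ℝ} (ht : 0 < t)
    (hψ : ∫ ω, Real.exp (Z ω ^ 2 / t ^ 2) ∂μ ≤ 2)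
    (hmean : ∫ ω, Z ω ∂μ = 0) (a : ℝ) :
    ∫ ω, Real.exp (a * Z ω) ∂μ ≤ Real.exp (2 * a ^ 2 * t ^ 2) := by
  have ht2 : (0:ℝ) < t ^ 2 := by positivity
  -- integrability facts
  have hintZ : Integrable Z μ := by
    refine Integrable.mono' (integrable_const 1) hZm.aestronglyMeasurable ?_
    filter_upwards [hZ1] with ω h using h
  have hintexp : ∀ c : ℝ, Integrable (fun ω => Real.exp (c * Z ω)) μ := by
    intro c
    refine Integrable.mono' (integrable_const (Real.exp |c|))
      (hZm.const_mul c).exp.aestronglyMeasurable ?_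
    filter_upwards [hZ1] with ω h
    rw [Real.norm_eq_abs, abs_of_nonneg (Real.exp_nonneg _)]
    apply Real.exp_le_exp.mpr
    calc c * Z ω ≤ |c * Z ω| := le_abs_self _
      _ = |c| * |Z ω| := abs_mul _ _
      _ ≤ |c| * 1 := by gcongr
      _ = |c| := mul_one _
  have hintexpsq : ∀ c : ℝ, 0 ≤ c → Integrable (fun ω => Real.exp (c * Z ω ^ 2)) μ := by
    intro c hc
    refine Integrable.mono' (integrable_const (Real.exp c))
      (((hZm.pow_const 2).const_mul c).exp).aestronglyMeasurable ?_
    filter_upwards [hZ1] with ω h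
    rw [Real.norm_eq_abs, abs_of_nonneg (Real.exp_nonneg _)]
    apply Real.exp_le_exp.mpr
    have : Z ω ^ 2 ≤ 1 := by nlinarith [abs_nonneg (Z ω), sq_abs (Z ω)]
    nlinarith
  have hintpsi : Integrable (fun ω => Real.exp (Z ω ^ 2 / t ^ 2)) μ := by
    have := hintexpsq (1 / t ^ 2) (by positivity)
    simpa [div_eq_mul_inv, mul_comm] using this
  set θ : ℝ := a ^ 2 * t ^ 2 with hθ
  have hθ0 : 0 ≤ θ := by positivity
  rcases le_or_gt θ 1 with hθ1 | hθ1
  · -- small case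
    have key : ∀ᵐ ω ∂μ, Real.exp (a * Z ω) ≤
        a * Z ω + ((1 - θ) + θ * Real.exp (Z ω ^ 2 / t ^ 2)) := by
      refine Filter.Eventually.of_forall fun ω => ?_
      have h1 := exp_le_add_exp_sq (a * Z ω)
      have h2 : (a * Z ω) ^ 2 = θ * (Z ω ^ 2 / t ^ 2) := by
        field_simp [hθ]; ring
      have h3 : Real.exp ((a * Z ω) ^ 2) ≤ (1 - θ) + θ * Real.exp (Z ω ^ 2 / t ^ 2) := by
        rw [h2]; exact exp_interp hθ0 hθ1
      linarith
    have hint1 : Integrable (fun ω => θ * Real.exp (Z ω ^ 2 / t ^ 2)) μ :=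
      hintpsi.const_mul θ
    have hg2 : Integrable (fun ω => (1 - θ) + θ * Real.exp (Z ω ^ 2 / t ^ 2)) μ :=
      (integrable_const _).add hint1
    have hintrhs : Integrable
        (fun ω => a * Z ω + ((1 - θ) + θ * Real.exp (Z ω ^ 2 / t ^ 2))) μ :=
      (hintZ.const_mul a).add hg2
    calc ∫ ω, Real.exp (a * Z ω) ∂μ
        ≤ ∫ ω, (a * Z ω + ((1 - θ) + θ * Real.exp (Z ω ^ 2 / t ^ 2))) ∂μ :=
          integral_mono_ae (hintexp a) hintrhs key
      _ = (∫ ω, a * Z ω ∂μ) + ((∫ _ω, (1 - θ) ∂μ) + ∫ ω, θ * Real.exp (Z ω ^ 2 / t ^ 2) ∂μ) := by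
          rw [integral_add (hintZ.const_mul a) hg2,
            integral_add (integrable_const _) hint1]
      _ = a * (∫ ω, Z ω ∂μ) + ((1 - θ) + θ * ∫ ω, Real.exp (Z ω ^ 2 / t ^ 2) ∂μ) := by
          rw [integral_const_mul, integral_const_mul, integral_const]; simp
      _ ≤ 0 + ((1 - θ) + θ * 2) := by
          rw [hmean]; simp only [mul_zero]; gcongr
      _ = 1 + θ := by ring
      _ ≤ Real.exp θ := by have := Real.add_one_le_exp θ; linarith
      _ ≤ Real.exp (2 * a ^ 2 * t ^ 2) := by
          apply Real.exp_le_exp.mpr; rw [hθ]; nlinarith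
  · -- large case
    have key : ∀ᵐ ω ∂μ, Real.exp (a * Z ω) ≤
        Real.exp (θ / 2) * Real.exp (Z ω ^ 2 / t ^ 2) := by
      refine Filter.Eventually.of_forall fun ω => ?_
      rw [← Real.exp_add]
      apply Real.exp_le_exp.mpr
      set p := |a| with hp
      set q := |Z ω| with hq
      have hq0 : 0 ≤ q := abs_nonneg _
      have hp0 : 0 ≤ p := abs_nonneg _
      have h3 : a * Z ω ≤ p * q := by
        calc a * Z ω ≤ |a * Z ω| := le_abs_self _
          _ = p * q := abs_mul _ _
      have e1 : (q / t) * t = q := div_mul_cancel₀ q (ne_of_gt ht)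
      have e2 : (q / t) ^ 2 = q ^ 2 / t ^ 2 := div_pow q t 2
      have e3 : p ^ 2 = a ^ 2 := sq_abs a
      have e4 : q ^ 2 = Z ω ^ 2 := sq_abs (Z ω)
      have h6 : 2 * (p * q) ≤ p ^ 2 * t ^ 2 + q ^ 2 / t ^ 2 := by
        nlinarith [sq_nonneg (p * t - q / t)]
      have h5 : Z ω ^ 2 / t ^ 2 = Z ω ^ 2 / (2 * t ^ 2) + Z ω ^ 2 / (2 * t ^ 2) := by
        ring
      have h7 : 0 ≤ Z ω ^ 2 / (2 * t ^ 2) := by positivity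
      have hθ' : θ = p ^ 2 * t ^ 2 := by rw [e3]
      have h8 : q ^ 2 / t ^ 2 = Z ω ^ 2 / (2 * t ^ 2) + Z ω ^ 2 / (2 * t ^ 2) := by
        rw [e4]; ring
      linarith
    have hintrhs : Integrable (fun ω => Real.exp (θ / 2) * Real.exp (Z ω ^ 2 / t ^ 2)) μ :=
      hintpsi.const_mul _
    calc ∫ ω, Real.exp (a * Z ω) ∂μ
        ≤ ∫ ω, Real.exp (θ / 2) * Real.exp (Z ω ^ 2 / t ^ 2) ∂μ :=
          integral_mono_ae (hintexp a) hintrhs key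
      _ = Real.exp (θ / 2) * ∫ ω, Real.exp (Z ω ^ 2 / t ^ 2) ∂μ := integral_const_mul _ _
      _ ≤ Real.exp (θ / 2) * 2 := by gcongr
      _ ≤ Real.exp (θ / 2) * Real.exp θ := by
          gcongr
          calc (2:ℝ) ≤ Real.exp 1 := by
                have := Real.add_one_le_exp (1:ℝ); linarith
            _ ≤ Real.exp θ := Real.exp_le_exp.mpr (by linarith)
      _ = Real.exp (θ / 2 + θ) := (Real.exp_add _ _).symm
      _ ≤ Real.exp (2 * a ^ 2 * t ^ 2) := by
          apply Real.exp_le_exp.mpr; rw [hθ]; nlinarith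

section Fubini

variable {m : ℕ}
local notation "E" => EuclideanSpace ℝ (Fin m)

/-- Fubini for a function of two independent, a.s. bounded random vectors. -/
lemma fubini_indep (μ : Measure Ω) [IsProbabilityMeasure μ] {X Y : Ω → E}
    (hX : Measurable X) (hY : Measurable Y) (hI : IndepFun X Y μ)
    {F : E × E → ℝ} (hF : Continuous F) {r₁ r₂ : ℝ}
    (hbX : ∀ᵐ ω ∂μ, ‖X ω‖ ≤ r₁) (hbY : ∀ᵐ ω ∂μ, ‖Y ω‖ ≤ r₂) :
    ∫ ω, F (X ω, Y ω) ∂μ = ∫ w, (∫ v, F (w, v) ∂(μ.map Y)) ∂(μ.map X) := by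
  have hmap : μ.map (fun ω => (X ω, Y ω)) = (μ.map X).prod (μ.map Y) :=
    (indepFun_iff_map_prod_eq_prod_map_map hX.aemeasurable hY.aemeasurable).mp hI
  have hprobX : IsProbabilityMeasure (μ.map X) := Measure.isProbabilityMeasure_map hX.aemeasurable
  have hprobY : IsProbabilityMeasure (μ.map Y) := Measure.isProbabilityMeasure_map hY.aemeasurable
  -- a.e. bounds on mapped measures
  have hsX : MeasurableSet {w : E | ‖w‖ ≤ r₁} :=
    (isClosed_le continuous_norm continuous_const).measurableSet
  have hsY : MeasurableSet {v : E | ‖v‖ ≤ r₂} :=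
    (isClosed_le continuous_norm continuous_const).measurableSet
  have hbX' : ∀ᵐ w ∂(μ.map X), ‖w‖ ≤ r₁ := by
    rw [ae_map_iff hX.aemeasurable hsX]; exact hbX
  have hbY' : ∀ᵐ v ∂(μ.map Y), ‖v‖ ≤ r₂ := by
    rw [ae_map_iff hY.aemeasurable hsY]; exact hbY
  -- bound on F over the product of balls
  obtain ⟨M, hM⟩ : ∃ M, ∀ p ∈ (Metric.closedBall (0:E) r₁) ×ˢ (Metric.closedBall (0:E) r₂),
      ‖F p‖ ≤ M :=
    ((isCompact_closedBall _ _).prod (isCompact_closedBall _ _)).exists_bound_of_continuousOn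
      hF.continuousOn
  have haeprod : ∀ᵐ p ∂((μ.map X).prod (μ.map Y)), ‖F p‖ ≤ M := by
    have h1 : ∀ᵐ p ∂((μ.map X).prod (μ.map Y)), ‖p.1‖ ≤ r₁ := by
      rw [ae_iff]
      have : {p : E × E | ¬‖p.1‖ ≤ r₁} = {w : E | ‖w‖ ≤ r₁}ᶜ ×ˢ Set.univ := by
        ext p; simp [Set.mem_prod]
      rw [this, Measure.prod_prod]
      rw [ae_iff] at hbX'
      simp only [measure_univ, mul_one]
      rw [Set.compl_setOf]; exact hbX'
    have h2 : ∀ᵐ p ∂((μ.map X).prod (μ.map Y)), ‖p.2‖ ≤ r₂ := by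
      rw [ae_iff]
      have : {p : E × E | ¬‖p.2‖ ≤ r₂} = Set.univ ×ˢ {v : E | ‖v‖ ≤ r₂}ᶜ := by
        ext p; simp [Set.mem_prod]
      rw [this, Measure.prod_prod]
      rw [ae_iff] at hbY'
      simp only [measure_univ, one_mul]
      rw [Set.compl_setOf]; exact hbY'
    filter_upwards [h1, h2] with p hp1 hp2
    exact hM p ⟨by simpa [Metric.mem_closedBall, dist_eq_norm] using hp1,
      by simpa [Metric.mem_closedBall, dist_eq_norm] using hp2⟩
  have hFint : Integrable F ((μ.map X).prod (μ.map Y)) :=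
    Integrable.mono' (integrable_const M) hF.aestronglyMeasurable haeprod
  calc ∫ ω, F (X ω, Y ω) ∂μ
      = ∫ p, F p ∂(μ.map (fun ω => (X ω, Y ω))) :=
        (integral_map (hX.prodMk hY).aemeasurable hF.aestronglyMeasurable).symm
    _ = ∫ p, F p ∂((μ.map X).prod (μ.map Y)) := by rw [hmap]
    _ = ∫ w, (∫ v, F (w, v) ∂(μ.map Y)) ∂(μ.map X) := integral_prod F hFint

end Fubini

section Col

variable {m : ℕ}
local notation "E" => EuclideanSpace ℝ (Fin m)

lemma col_psi (μ : Measure Ω) [IsProbabilityMeasure μ] (V : Ω → E)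
    (hVm : Measurable V) (hnorm : ∀ᵐ ω ∂μ, ‖V ω‖ = 1) (hsub : SubgaussianVec μ V)
    {K : ℝ} (hK : 0 < K) (hvp : vpsi2 μ V ≤ K)
    (u : E) (hu : ‖u‖ = 1) :
    ∫ ω, Real.exp ((inner ℝ (V ω) u : ℝ) ^ 2 / (2 * K) ^ 2) ∂μ ≤ 2 := by
  obtain ⟨t₀, ht₀, hall⟩ := hsub
  have habs : ∀ u' : E, ‖u'‖ = 1 → ∀ᵐ ω ∂μ, |(inner ℝ (V ω) u' : ℝ)| ≤ 1 := by
    intro u' hu'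
    filter_upwards [hnorm] with ω h
    calc |(inner ℝ (V ω) u' : ℝ)| ≤ ‖V ω‖ * ‖u'‖ := abs_real_inner_le_norm _ _
      _ = 1 := by rw [h, hu', mul_one]
  have hintt : ∀ u' : E, ‖u'‖ = 1 → ∀ t : ℝ, 0 < t →
      Integrable (fun ω => Real.exp ((inner ℝ (V ω) u' : ℝ) ^ 2 / t ^ 2)) μ := by
    intro u' hu' t ht
    refine Integrable.mono' (integrable_const (Real.exp (1 / t ^ 2)))
      ((((Measurable.inner hVm measurable_const).pow_const 2).div_const _).exp).aestronglyMeasurable ?_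
    filter_upwards [habs u' hu'] with ω h
    rw [Real.norm_eq_abs, abs_of_nonneg (Real.exp_nonneg _)]
    apply Real.exp_le_exp.mpr
    gcongr
    all_goals first
      | positivity
      | nlinarith [abs_nonneg ((inner ℝ (V ω) u' : ℝ)), sq_abs ((inner ℝ (V ω) u' : ℝ))]
  have hmem : ∀ u' : E, ‖u'‖ = 1 →
      t₀ ∈ {s : ℝ | 0 < s ∧ ∫ ω, Real.exp ((inner ℝ (V ω) u' : ℝ) ^ 2 / s ^ 2) ∂μ ≤ 2} :=
    fun u' hu' => ⟨ht₀, hall u' hu'⟩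
  have hbddb : ∀ u' : E,
      BddBelow {s : ℝ | 0 < s ∧ ∫ ω, Real.exp ((inner ℝ (V ω) u' : ℝ) ^ 2 / s ^ 2) ∂μ ≤ 2} :=
    fun u' => ⟨0, fun y hy => hy.1.le⟩
  have hpsile : ∀ u' : {u' : E // ‖u'‖ = 1},
      psi2 μ (fun ω => (inner ℝ (V ω) (u' : E) : ℝ)) ≤ t₀ :=
    fun u' => csInf_le (hbddb u') (hmem u' u'.2)
  have h1 : psi2 μ (fun ω => (inner ℝ (V ω) u : ℝ)) ≤ K := by
    refine le_trans ?_ hvp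
    exact le_ciSup ⟨t₀, by rintro y ⟨u', rfl⟩; exact hpsile u'⟩ (⟨u, hu⟩ : {u' : E // ‖u'‖ = 1})
  have hne : Set.Nonempty
      {s : ℝ | 0 < s ∧ ∫ ω, Real.exp ((inner ℝ (V ω) u : ℝ) ^ 2 / s ^ 2) ∂μ ≤ 2} :=
    ⟨t₀, hmem u hu⟩
  have hlt : sInf {s : ℝ | 0 < s ∧ ∫ ω, Real.exp ((inner ℝ (V ω) u : ℝ) ^ 2 / s ^ 2) ∂μ ≤ 2}
      < 2 * K := lt_of_le_of_lt h1 (by linarith)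
  obtain ⟨s, hsmem, hslt⟩ := exists_lt_of_csInf_lt hne hlt
  calc ∫ ω, Real.exp ((inner ℝ (V ω) u : ℝ) ^ 2 / (2 * K) ^ 2) ∂μ
      ≤ ∫ ω, Real.exp ((inner ℝ (V ω) u : ℝ) ^ 2 / s ^ 2) ∂μ := by
        refine integral_mono_ae (hintt u hu _ (by linarith)) (hintt u hu s hsmem.1) ?_
        refine Filter.Eventually.of_forall fun ω => ?_
        apply Real.exp_le_exp.mpr
        gcongr
        all_goals first
          | positivity
          | nlinarith [hsmem.1, hslt, sq_nonneg ((inner ℝ (V ω) u : ℝ))]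
    _ ≤ 2 := hsmem.2

lemma col_mgf (μ : Measure Ω) [IsProbabilityMeasure μ] (V : Ω → E)
    (hVm : Measurable V) (hnorm : ∀ᵐ ω ∂μ, ‖V ω‖ = 1) (hsub : SubgaussianVec μ V)
    {K : ℝ} (hK : 0 < K) (hvp : vpsi2 μ V ≤ K)
    (hint : Integrable V μ) (hmean : ∫ ω, V ω ∂μ = 0)
    (w : E) (a : ℝ) :
    ∫ ω, Real.exp (a * (inner ℝ (V ω) w : ℝ)) ∂μ ≤
      Real.exp (8 * a ^ 2 * K ^ 2 * ‖w‖ ^ 2) := by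
  by_cases hw : w = 0
  · subst hw
    simp only [inner_zero_right, mul_zero, Real.exp_zero, integral_const, measure_univ,
      ENNReal.toReal_one, probReal_univ, smul_eq_mul, mul_one]
    rw [← Real.exp_zero]
    exact Real.exp_le_exp.mpr (by positivity)
  · set u : E := ‖w‖⁻¹ • w with hu_def
    have hu : ‖u‖ = 1 := norm_smul_inv_norm hw
    have hwu : ‖w‖ • u = w := by
      rw [hu_def, smul_smul, mul_inv_cancel₀ (norm_ne_zero_iff.mpr hw), one_smul]
    have habs : ∀ᵐ ω ∂μ, |(inner ℝ (V ω) u : ℝ)| ≤ 1 := by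
      filter_upwards [hnorm] with ω h
      calc |(inner ℝ (V ω) u : ℝ)| ≤ ‖V ω‖ * ‖u‖ := abs_real_inner_le_norm _ _
        _ = 1 := by rw [h, hu, mul_one]
    have hmeanZ : ∫ ω, (inner ℝ (V ω) u : ℝ) ∂μ = 0 := by
      have h1 : ∀ ω, (inner ℝ (V ω) u : ℝ) = (inner ℝ u (V ω) : ℝ) :=
        fun ω => real_inner_comm _ _
      simp_rw [h1]
      rw [integral_inner hint u, hmean, inner_zero_right]
    have hψ := col_psi μ V hVm hnorm hsub hK hvp u hu
    have hmgf := scalar_mgf μ (fun ω => (inner ℝ (V ω) u : ℝ))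
      (Measurable.inner hVm measurable_const) habs (by linarith : (0:ℝ) < 2 * K)
      hψ hmeanZ (a * ‖w‖)
    have hrw : ∀ ω, a * ‖w‖ * (inner ℝ (V ω) u : ℝ) = a * (inner ℝ (V ω) w : ℝ) := by
      intro ω
      have h2 : (inner ℝ (V ω) w : ℝ) = ‖w‖ * inner ℝ (V ω) u := by
        conv_lhs => rw [← hwu]
        rw [real_inner_smul_right]
      rw [h2]; ring
    simp_rw [hrw] at hmgf
    calc ∫ ω, Real.exp (a * (inner ℝ (V ω) w : ℝ)) ∂μ
        ≤ Real.exp (2 * (a * ‖w‖) ^ 2 * (2 * K) ^ 2) := hmgf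
      _ = Real.exp (8 * a ^ 2 * K ^ 2 * ‖w‖ ^ 2) := by ring_nf

end Col

lemma step_arith {K2 b sg y : ℝ} (hK2 : 0 < K2) (hσ : 0 ≤ sg) (hy0 : 0 ≤ y) (hy1 : y ≤ 1)
    (hb : |b| ≤ (2 - (sg + y)) * (1 / (32 * K2))) :
    |b + 8 * b ^ 2 * y * K2| ≤ (2 - sg) * (1 / (32 * K2)) ∧
      8 * b ^ 2 * y * K2 * sg +
        12 * K2 * (b + 8 * b ^ 2 * y * K2) ^ 2 * (Real.exp (2 * sg) - 1) ≤
      12 * K2 * b ^ 2 * (Real.exp (2 * (sg + y)) - 1) := by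
  set L : ℝ := 1 / (32 * K2) with hL
  have hL0 : 0 < L := by positivity
  have hLK2 : 32 * K2 * L = 1 := by rw [hL]; field_simp
  set ε : ℝ := 8 * b ^ 2 * y * K2 with hε
  have hε0 : 0 ≤ ε := by positivity
  have hb2 : |b| ≤ 2 * L := le_trans hb (mul_le_mul_of_nonneg_right (by linarith) hL0.le)
  have habs := abs_nonneg b
  have hbsq : b ^ 2 = |b| ^ 2 := (sq_abs b).symm
  have hεle : ε ≤ |b| * y / 2 := by
    have h1 : 0 ≤ 8 * y * K2 * |b| := by positivity
    have h2 := mul_le_mul_of_nonneg_left hb2 h1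
    have h3 : 8 * y * K2 * |b| * (2 * L) = y * |b| / 2 * (32 * K2 * L) := by ring
    rw [hLK2, mul_one] at h3
    have h4 : ε = 8 * y * K2 * |b| * |b| := by rw [hε, hbsq]; ring
    linarith
  have part1 : |b + ε| ≤ (2 - sg) * L := by
    have h5 : |b| * y ≤ 2 * L * y := mul_le_mul_of_nonneg_right hb2 hy0
    calc |b + ε| ≤ |b| + |ε| := abs_add_le _ _
      _ = |b| + ε := by rw [abs_of_nonneg hε0]
      _ ≤ (2 - (sg + y)) * L + |b| * y / 2 := by linarith
      _ ≤ (2 - (sg + y)) * L + (2 * L) * y / 2 := by linarith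
      _ = (2 - sg) * L := by ring
  refine ⟨part1, ?_⟩
  -- second part
  have hbp : |b + ε| ≤ |b| * (1 + y / 2) := by
    calc |b + ε| ≤ |b| + |ε| := abs_add_le _ _
      _ = |b| + ε := by rw [abs_of_nonneg hε0]
      _ ≤ |b| + |b| * y / 2 := by linarith
      _ = |b| * (1 + y / 2) := by ring
  have hbp2 : (b + ε) ^ 2 ≤ b ^ 2 * (1 + 5 / 4 * y) := by
    have h1 : (b + ε) ^ 2 = |b + ε| ^ 2 := (sq_abs _).symm
    have h2 : |b + ε| ^ 2 ≤ (|b| * (1 + y / 2)) ^ 2 := by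
      apply sq_le_sq' <;> nlinarith [abs_nonneg (b + ε)]
    rw [h1]
    calc |b + ε| ^ 2 ≤ (|b| * (1 + y / 2)) ^ 2 := h2
      _ = b ^ 2 * (1 + y / 2) ^ 2 := by rw [mul_pow, ← hbsq]
      _ ≤ b ^ 2 * (1 + 5 / 4 * y) := by nlinarith [sq_nonneg b]
  set u : ℝ := Real.exp (2 * sg) with hu
  have hu1 : 1 + 2 * sg ≤ u := by
    have := Real.add_one_le_exp (2 * sg); rw [hu]; linarith
  have hu0 : 1 ≤ u := by linarith
  have hexp2 : u * (1 + 2 * y) ≤ Real.exp (2 * (sg + y)) := by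
    have h3 : Real.exp (2 * (sg + y)) = u * Real.exp (2 * y) := by
      rw [hu, ← Real.exp_add]; ring_nf
    rw [h3]
    have h4 : 1 + 2 * y ≤ Real.exp (2 * y) := by
      have := Real.add_one_le_exp (2 * y); linarith
    nlinarith
  have h9 : (0:ℝ) ≤ K2 * b ^ 2 * y := by positivity
  have h8 : 0 ≤ 9 * u + 15 - 8 * sg := by linarith
  have h10 : 12 * K2 * (b + ε) ^ 2 * (u - 1) ≤ 12 * K2 * (b ^ 2 * (1 + 5 / 4 * y)) * (u - 1) := by
    apply mul_le_mul_of_nonneg_right _ (by linarith)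
    nlinarith
  have h13 : 12 * K2 * b ^ 2 * (u * (1 + 2 * y) - 1) -
      (ε * sg + 12 * K2 * (b ^ 2 * (1 + 5 / 4 * y)) * (u - 1)) =
      (K2 * b ^ 2 * y) * (9 * u + 15 - 8 * sg) := by
    rw [hε]; ring
  have key : ε * sg + 12 * K2 * (b + ε) ^ 2 * (u - 1) ≤
      12 * K2 * b ^ 2 * (u * (1 + 2 * y) - 1) := by
    have h14 := mul_nonneg h9 h8
    linarith
  calc ε * sg + 12 * K2 * (b + ε) ^ 2 * (u - 1)
      ≤ 12 * K2 * b ^ 2 * (u * (1 + 2 * y) - 1) := key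
    _ ≤ 12 * K2 * b ^ 2 * (Real.exp (2 * (sg + y)) - 1) := by
        apply mul_le_mul_of_nonneg_left _ (by positivity)
        linarith

set_option maxHeartbeats 2000000 in
theorem stmt3 :
    ∃ C : ℝ, 0 < C ∧ ∃ c : ℝ, 0 < c ∧
      ∀ (K : ℝ), 0 < K →
      ∀ (m n : ℕ) (Ω : Type) (_ : MeasurableSpace Ω) (μ : Measure Ω),
        IsProbabilityMeasure μ →
        ∀ A : Fin n → Ω → EuclideanSpace ℝ (Fin m),
          (∀ i, Measurable (A i)) →
          iIndepFun A μ →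
          (∀ i, Integrable (A i) μ) →
          (∀ i, ∫ ω, A i ω ∂μ = 0) →
          (∀ i, SubgaussianVec μ (A i)) →
          (∀ i, ∀ᵐ ω ∂μ, ‖A i ω‖ = 1) →
          (∀ i, vpsi2 μ (A i) ≤ K) →
          ∀ x : EuclideanSpace ℝ (Fin n), ‖x‖ = 1 →
            ∀ l : ℝ, |l| ≤ c / K ^ 2 →
              ∫ ω, Real.exp (l * (‖∑ i, x i • A i ω‖ ^ 2 - 1)) ∂μ ≤
                Real.exp (C * l ^ 2 * K ^ 2) := by
  refine ⟨400, by norm_num, 1 / 128, by norm_num, ?_⟩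
  intro K hK m n Ω _ μ hprob A hAm hAindep hAint hAmean hAsub hAnorm hAvp x hx l hl
  haveI := hprob
  set K2 : ℝ := 4 * K ^ 2 with hK2def
  have hK2 : 0 < K2 := by rw [hK2def]; positivity
  set L : ℝ := 1 / (32 * K2) with hLdef
  have hL0 : 0 < L := by rw [hLdef]; positivity
  -- coordinates of x
  have hx2 : ∑ j : Fin n, (x j) ^ 2 = 1 := by
    have h1 : ‖x‖ = Real.sqrt (∑ j : Fin n, ‖x j‖ ^ 2) := EuclideanSpace.norm_eq x
    rw [hx] at h1
    have h2 : ∑ j : Fin n, ‖x j‖ ^ 2 = ∑ j : Fin n, (x j) ^ 2 := by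
      apply Finset.sum_congr rfl; intro j _; rw [Real.norm_eq_abs, sq_abs]
    rw [h2] at h1
    have h3 := congrArg (· ^ 2) h1.symm
    simpa [Real.sq_sqrt (Finset.sum_nonneg fun j _ => sq_nonneg (x j))] using h3
  have hxj2 : ∀ j : Fin n, (x j) ^ 2 ≤ 1 := by
    intro j
    rw [← hx2]
    exact Finset.single_le_sum (fun j _ => sq_nonneg (x j)) (Finset.mem_univ j)
  have hxabs : ∀ j : Fin n, |x j| ≤ 1 := by
    intro j
    rw [← abs_one]
    apply abs_le_abs _ _ <;> nlinarith [hxj2 j, abs_nonneg (x j), sq_abs (x j), le_abs_self (x j), neg_abs_le (x j)]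
  -- definitions
  set sfin : ℕ → Finset (Fin n) := fun k => Finset.univ.filter (fun j => (j : ℕ) < k)
    with hsfin
  have hmem_sfin : ∀ (k : ℕ) (j : Fin n), j ∈ sfin k ↔ (j : ℕ) < k := by
    intro k j
    rw [hsfin]
    simp
  set W : ℕ → Ω → EuclideanSpace ℝ (Fin m) := fun k ω => ∑ j ∈ sfin k, x j • A j ω with hW
  set sg : ℕ → ℝ := fun k => ∑ j ∈ sfin k, (x j) ^ 2 with hsg
  have hsg0 : ∀ k, 0 ≤ sg k := fun k => Finset.sum_nonneg fun j _ => sq_nonneg (x j)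
  have hsgle : ∀ k, sg k ≤ 1 := by
    intro k
    rw [hsg, ← hx2]
    exact Finset.sum_le_sum_of_subset_of_nonneg (Finset.subset_univ _)
      (fun j _ _ => sq_nonneg (x j))
  have hWm : ∀ k, Measurable (W k) := by
    intro k
    apply Finset.measurable_sum
    intro j _
    exact (hAm j).const_smul (x j)
  have hae : ∀ᵐ ω ∂μ, ∀ j : Fin n, ‖A j ω‖ = 1 := ae_all_iff.mpr hAnorm
  have hWb : ∀ k, ∀ᵐ ω ∂μ, ‖W k ω‖ ≤ (n : ℝ) := by
    intro k
    filter_upwards [hae] with ω h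
    calc ‖W k ω‖ ≤ ∑ j ∈ sfin k, ‖x j • A j ω‖ := norm_sum_le _ _
      _ = ∑ j ∈ sfin k, |x j| := by
          apply Finset.sum_congr rfl; intro j _
          rw [norm_smul, h j, mul_one, Real.norm_eq_abs]
      _ ≤ ∑ _j ∈ sfin k, (1 : ℝ) := Finset.sum_le_sum fun j _ => hxabs j
      _ = (sfin k).card := by simp
      _ ≤ (n : ℝ) := by
          have := Finset.card_le_univ (sfin k)
          simp only [Finset.card_univ, Fintype.card_fin] at this
          exact_mod_cast this
  have hB1 : ∀ j : Fin n, ∀ᵐ ω ∂μ, ‖x j • A j ω‖ ≤ (1 : ℝ) := by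
    intro j
    filter_upwards [hAnorm j] with ω h
    rw [norm_smul, h, mul_one, Real.norm_eq_abs]
    exact hxabs j
  -- the main claim
  have claim : ∀ k, k ≤ n → ∀ b : ℝ, |b| ≤ (2 - sg k) * L →
      (∫ ω, Real.exp (b * (‖W k ω‖ ^ 2 - sg k)) ∂μ) ≤
        Real.exp (12 * K2 * b ^ 2 * (Real.exp (2 * sg k) - 1)) := by
    intro k
    induction k with
    | zero =>
      intro _ b _
      have hs0 : sfin 0 = ∅ := by ext j; rw [hmem_sfin]; simp
      have hW0 : ∀ ω, W 0 ω = 0 := by intro ω; simp [hW, hs0]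
      have hsg0' : sg 0 = 0 := by simp [hsg, hs0]
      simp [hW0, hsg0']
    | succ k ih =>
      intro hk1 b hb
      have hk : k < n := hk1
      set i : Fin n := ⟨k, hk⟩ with hi
      have hsucc : sfin (k + 1) = insert i (sfin k) := by
        ext j
        rw [Finset.mem_insert, hmem_sfin, hmem_sfin]
        have : (j = i) ↔ ((j : ℕ) = k) := by
          rw [Fin.ext_iff]
        rw [this]
        omega
      have hinot : i ∉ sfin k := by
        rw [hmem_sfin]
        simp [hi]
      have hsg1 : sg (k + 1) = sg k + (x i) ^ 2 := by
        simp only [hsg]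
        rw [hsucc, Finset.sum_insert hinot]
        ring
      have hW1 : ∀ ω, W (k + 1) ω = W k ω + x i • A i ω := by
        intro ω
        simp only [hW]
        rw [hsucc, Finset.sum_insert hinot, add_comm]
      -- independence
      have hIndep : IndepFun (W k) (fun ω => x i • A i ω) μ := by
        have h0 : iIndepFun (fun j ω => x j • A j ω) μ :=
          hAindep.comp (fun j v => x j • v) (fun j => measurable_const_smul _)
        have h1 := h0.indepFun_finset_sum_of_notMem
          (fun j => (hAm j).const_smul (x j)) hinot
        have h2 : W k = (∑ j ∈ sfin k, fun ω => x j • A j ω) := by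
          funext ω
          rw [hW]
          simp [Finset.sum_apply]
        rw [h2]
        exact h1
      -- ε and step arithmetic
      set ε : ℝ := 8 * b ^ 2 * (x i) ^ 2 * K2 with hε
      have hb' : |b| ≤ (2 - (sg k + (x i) ^ 2)) * (1 / (32 * K2)) := by
        rw [← hsg1]
        rw [hLdef] at hb
        exact hb
      obtain ⟨hstep1, hstep2⟩ := step_arith hK2 (hsg0 k) (sq_nonneg (x i)) (hxj2 i) hb'
      -- Fubini
      set F : EuclideanSpace ℝ (Fin m) × EuclideanSpace ℝ (Fin m) → ℝ :=
        fun p => Real.exp (b * (‖p.1 + p.2‖ ^ 2 - sg (k + 1))) with hF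
      have hFcont : Continuous F := by
        apply Real.continuous_exp.comp
        exact continuous_const.mul
          (((continuous_fst.add continuous_snd).norm.pow 2).sub continuous_const)
      have hfub := fubini_indep μ (hWm k) ((hAm i).const_smul (x i)) hIndep hFcont
        (hWb k) (hB1 i)
      -- inner bound
      set νB := μ.map (fun ω => x i • A i ω) with hνB
      set νW := μ.map (W k) with hνW
      set gfun : EuclideanSpace ℝ (Fin m) → ℝ :=
        fun w => Real.exp ((b + ε) * (‖w‖ ^ 2 - sg k) + ε * sg k) with hg
      have hgcont : Continuous gfun := by
        apply Real.continuous_exp.comp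
        exact (continuous_const.mul ((continuous_norm.pow 2).sub continuous_const)).add
          continuous_const
      have hinner : ∀ w, (∫ v, F (w, v) ∂νB) ≤ gfun w := by
        intro w
        have hc1 : Continuous fun v => F (w, v) :=
          hFcont.comp (continuous_const.prodMk continuous_id)
        have h1 : ∫ v, F (w, v) ∂νB = ∫ ω, F (w, x i • A i ω) ∂μ := by
          rw [hνB]
          exact integral_map ((hAm i).const_smul (x i)).aemeasurable
            hc1.aestronglyMeasurable
        rw [h1]
        have h2 : ∀ᵐ ω ∂μ, F (w, x i • A i ω) =
            Real.exp (b * (‖w‖ ^ 2 - sg k)) *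
              Real.exp ((2 * b * x i) * (inner ℝ (A i ω) w : ℝ)) := by
          filter_upwards [hAnorm i] with ω hω
          simp only [hF]
          rw [norm_add_sq_real, ← Real.exp_add]
          congr 1
          have e1 : ‖x i • A i ω‖ ^ 2 = (x i) ^ 2 := by
            rw [norm_smul, hω, mul_one, Real.norm_eq_abs, sq_abs]
          have e2 : (inner ℝ w (x i • A i ω) : ℝ) = x i * (inner ℝ (A i ω) w : ℝ) := by
            rw [real_inner_smul_right, real_inner_comm]
          rw [e1, e2, hsg1]
          ring
        rw [integral_congr_ae h2, integral_const_mul]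
        have h3 := col_mgf μ (A i) (hAm i) (hAnorm i) (hAsub i) hK (hAvp i) (hAint i)
          (hAmean i) w (2 * b * x i)
        calc Real.exp (b * (‖w‖ ^ 2 - sg k)) *
              ∫ ω, Real.exp ((2 * b * x i) * (inner ℝ (A i ω) w : ℝ)) ∂μ
            ≤ Real.exp (b * (‖w‖ ^ 2 - sg k)) *
              Real.exp (8 * (2 * b * x i) ^ 2 * K ^ 2 * ‖w‖ ^ 2) :=
              mul_le_mul_of_nonneg_left h3 (Real.exp_nonneg _)
          _ = gfun w := by
              rw [← Real.exp_add, hg]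
              congr 1
              rw [hε, hK2def]
              ring
      -- integrability over νW
      haveI : IsProbabilityMeasure νB := Measure.isProbabilityMeasure_map
        ((hAm i).const_smul (x i)).aemeasurable
      haveI : IsProbabilityMeasure νW := Measure.isProbabilityMeasure_map (hWm k).aemeasurable
      have hwae : ∀ᵐ w ∂νW, ‖w‖ ≤ (n : ℝ) := by
        rw [hνW, ae_map_iff (hWm k).aemeasurable
          ((isClosed_le continuous_norm continuous_const).measurableSet)]
        exact hWb k
      set Mg : ℝ := Real.exp (|b + ε| * ((n : ℝ) ^ 2 + 1) + ε * sg k) with hMg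
      have hgbound : ∀ w : EuclideanSpace ℝ (Fin m), ‖w‖ ≤ (n : ℝ) → gfun w ≤ Mg := by
        intro w hw
        simp only [hg, hMg]
        apply Real.exp_le_exp.mpr
        have h4 : |‖w‖ ^ 2 - sg k| ≤ (n : ℝ) ^ 2 + 1 := by
          rw [abs_le]
          constructor
          · have := hsgle k; nlinarith [sq_nonneg ‖w‖, Nat.cast_nonneg (α := ℝ) n]
          · have := hsg0 k; nlinarith [norm_nonneg w, Nat.cast_nonneg (α := ℝ) n]
        have h5 : (b + ε) * (‖w‖ ^ 2 - sg k) ≤ |b + ε| * ((n : ℝ) ^ 2 + 1) := by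
          calc (b + ε) * (‖w‖ ^ 2 - sg k) ≤ |(b + ε) * (‖w‖ ^ 2 - sg k)| := le_abs_self _
            _ = |b + ε| * |‖w‖ ^ 2 - sg k| := abs_mul _ _
            _ ≤ |b + ε| * ((n : ℝ) ^ 2 + 1) := by
                apply mul_le_mul_of_nonneg_left h4 (abs_nonneg _)
        linarith
      have hgint : Integrable gfun νW := by
        refine Integrable.mono' (integrable_const Mg) hgcont.aestronglyMeasurable ?_
        filter_upwards [hwae] with w hw
        rw [Real.norm_eq_abs, abs_of_nonneg (Real.exp_nonneg _)]
        exact hgbound w hw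
      have hfmeas : StronglyMeasurable (fun w => ∫ v, F (w, v) ∂νB) :=
        hFcont.stronglyMeasurable.integral_prod_right'
      have hfnonneg : ∀ w, 0 ≤ ∫ v, F (w, v) ∂νB :=
        fun w => integral_nonneg fun v => Real.exp_nonneg _
      have hfint : Integrable (fun w => ∫ v, F (w, v) ∂νB) νW := by
        refine Integrable.mono' hgint hfmeas.aestronglyMeasurable ?_
        refine Filter.Eventually.of_forall fun w => ?_
        rw [Real.norm_eq_abs, abs_of_nonneg (hfnonneg w)]
        exact hinner w
      -- putting it together
      have hεsg : 0 ≤ ε := by rw [hε]; positivity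
      calc ∫ ω, Real.exp (b * (‖W (k + 1) ω‖ ^ 2 - sg (k + 1))) ∂μ
          = ∫ ω, F (W k ω, x i • A i ω) ∂μ := by
            apply integral_congr_ae
            refine Filter.Eventually.of_forall fun ω => ?_
            simp only [hF]
            rw [hW1 ω]
        _ = ∫ w, (∫ v, F (w, v) ∂νB) ∂νW := hfub
        _ ≤ ∫ w, gfun w ∂νW :=
            integral_mono_ae hfint hgint (Filter.Eventually.of_forall hinner)
        _ = ∫ ω, gfun (W k ω) ∂μ := by
            rw [hνW]
            exact integral_map (hWm k).aemeasurable hgcont.aestronglyMeasurable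
        _ = Real.exp (ε * sg k) *
              ∫ ω, Real.exp ((b + ε) * (‖W k ω‖ ^ 2 - sg k)) ∂μ := by
            rw [← integral_const_mul]
            apply integral_congr_ae
            refine Filter.Eventually.of_forall fun ω => ?_
            simp only [hg]
            rw [Real.exp_add]
            ring
        _ ≤ Real.exp (ε * sg k) *
              Real.exp (12 * K2 * (b + ε) ^ 2 * (Real.exp (2 * sg k) - 1)) := by
            apply mul_le_mul_of_nonneg_left _ (Real.exp_nonneg _)
            apply ih hk.le (b + ε)
            rw [hε, hLdef]
            exact hstep1
        _ = Real.exp (ε * sg k + 12 * K2 * (b + ε) ^ 2 * (Real.exp (2 * sg k) - 1)) :=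
            (Real.exp_add _ _).symm
        _ ≤ Real.exp (12 * K2 * b ^ 2 * (Real.exp (2 * sg (k + 1)) - 1)) := by
            apply Real.exp_le_exp.mpr
            rw [hsg1]
            calc ε * sg k + 12 * K2 * (b + ε) ^ 2 * (Real.exp (2 * sg k) - 1)
                = 8 * b ^ 2 * (x i) ^ 2 * K2 * sg k +
                  12 * K2 * (b + 8 * b ^ 2 * (x i) ^ 2 * K2) ^ 2 *
                    (Real.exp (2 * sg k) - 1) := by rw [hε]
              _ ≤ 12 * K2 * b ^ 2 * (Real.exp (2 * (sg k + (x i) ^ 2)) - 1) := hstep2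
  -- apply the claim at k = n
  have hsn : sfin n = Finset.univ := by
    ext j; rw [hmem_sfin]; simp [j.isLt]
  have hsgn : sg n = 1 := by
    rw [hsg]; simp only [hsn]; exact hx2
  have hWn : ∀ ω, W n ω = ∑ j, x j • A j ω := by
    intro ω; rw [hW]; simp only [hsn]
  have hl' : |l| ≤ (2 - sg n) * L := by
    rw [hsgn, hLdef, hK2def]
    have : (2 - 1 : ℝ) * (1 / (32 * (4 * K ^ 2))) = (1 / 128) / K ^ 2 := by
      field_simp; ring
    rw [this]
    exact hl
  have hfinal := claim n le_rfl l hl'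
  simp only [hWn, hsgn] at hfinal
  calc ∫ ω, Real.exp (l * (‖∑ j, x j • A j ω‖ ^ 2 - 1)) ∂μ
      ≤ Real.exp (12 * K2 * l ^ 2 * (Real.exp (2 * 1) - 1)) := hfinal
    _ ≤ Real.exp (400 * l ^ 2 * K ^ 2) := by
        apply Real.exp_le_exp.mpr
        have he1 : Real.exp 1 < 2.7182818286 := Real.exp_one_lt_d9
        have he2 : Real.exp (2 * 1) = Real.exp 1 * Real.exp 1 := by
          rw [← Real.exp_add]; norm_num
        have he3 : Real.exp (2 * 1) < 7.39 := by
          rw [he2]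
          calc Real.exp 1 * Real.exp 1 < 2.7182818286 * 2.7182818286 :=
                mul_lt_mul'' he1 he1 (Real.exp_pos 1).le (Real.exp_pos 1).le
            _ < 7.39 := by norm_num
        have h7 : Real.exp (2 * 1) - 1 ≤ 6.39 := by linarith
        have h8 : (0:ℝ) ≤ 48 * (l ^ 2 * K ^ 2) := by positivity
        calc 12 * K2 * l ^ 2 * (Real.exp (2 * 1) - 1)
            = 48 * (l ^ 2 * K ^ 2) * (Real.exp (2 * 1) - 1) := by rw [hK2def]; ring
          _ ≤ 48 * (l ^ 2 * K ^ 2) * 6.39 := mul_le_mul_of_nonneg_left h7 h8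
          _ ≤ 400 * l ^ 2 * K ^ 2 := by nlinarith [mul_nonneg (sq_nonneg l) (sq_nonneg K)]
end

section
/- Let Z be a random variable satisfying P(|Z^2 - 1| >= t) <= 2*exp(-(c/K^2)*min(t^2,t)) for all t >= 0, where Z >= 0 almost surely. Then P(|Z - 1| >= delta) <= 2*exp(-c*delta^2/K^2) for all delta >= 0. -/
open MeasureTheory ProbabilityTheory Real
open scoped BigOperators ENNReal

theorem stmt7 (c K : ℝ) (hc : 0 < c) (hK : 0 < K)
    (Ω : Type) [MeasurableSpace Ω] (μ : Measure Ω) [IsProbabilityMeasure μ]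
    (Z : Ω → ℝ)
    (hpos : ∀ᵐ ω ∂μ, 0 ≤ Z ω)
    (htail : ∀ t : ℝ, 0 ≤ t →
      μ {ω | t ≤ |Z ω ^ 2 - 1|} ≤
        ENNReal.ofReal (2 * Real.exp (-(c / K ^ 2) * min (t ^ 2) t))) :
    ∀ δ : ℝ, 0 ≤ δ →
      μ {ω | δ ≤ |Z ω - 1|} ≤
        ENNReal.ofReal (2 * Real.exp (-c * δ ^ 2 / K ^ 2)) := by
  intro δ hδ
  set t := max δ (δ ^ 2) with ht_def
  have ht : 0 ≤ t := le_trans hδ (le_max_left _ _)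
  have hδt : δ ≤ t := le_max_left _ _
  have hδ2t : δ ^ 2 ≤ t := le_max_right _ _
  have hδ2t2 : δ ^ 2 ≤ t ^ 2 := by nlinarith
  have hmin : δ ^ 2 ≤ min (t ^ 2) t := le_min hδ2t2 hδ2t
  have hsub : μ {ω | δ ≤ |Z ω - 1|} ≤ μ {ω | t ≤ |Z ω ^ 2 - 1|} := by
    apply measure_mono_ae
    filter_upwards [hpos] with ω hω hδω
    have h1 : |Z ω - 1| ≤ |Z ω ^ 2 - 1| := by
      rcases abs_cases (Z ω - 1) with ⟨e1, _⟩ | ⟨e1, _⟩ <;>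
        rcases abs_cases (Z ω ^ 2 - 1) with ⟨e2, _⟩ | ⟨e2, _⟩ <;> nlinarith
    have h2 : |Z ω - 1| ^ 2 ≤ |Z ω ^ 2 - 1| := by
      rcases abs_cases (Z ω - 1) with ⟨e1, _⟩ | ⟨e1, _⟩ <;>
        rcases abs_cases (Z ω ^ 2 - 1) with ⟨e2, _⟩ | ⟨e2, _⟩ <;> nlinarith
    have hδω' : δ ≤ |Z ω - 1| := hδω
    show t ≤ |Z ω ^ 2 - 1|
    exact max_le (le_trans hδω' h1)
      (le_trans (by nlinarith [abs_nonneg (Z ω - 1)]) h2)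
  refine le_trans hsub (le_trans (htail t ht) ?_)
  apply ENNReal.ofReal_le_ofReal
  have hcK : 0 < c / K ^ 2 := div_pos hc (by positivity)
  have : -(c / K ^ 2) * min (t ^ 2) t ≤ -c * δ ^ 2 / K ^ 2 := by
    have h := mul_le_mul_of_nonneg_left hmin (le_of_lt hcK)
    have heq : -c * δ ^ 2 / K ^ 2 = -(c / K ^ 2) * δ ^ 2 := by ring
    rw [heq]; linarith
  have := Real.exp_le_exp.mpr this
  linarith
end

section
/- Let Y be a random vector in R^m whose entries are independent and take value 1 or -1 each with probability s/(2m), and 0 with probability 1 - s/m, where 1 <= s <= m. Then ||Y||_{psi_2} <= C / sqrt(log(1 + m/s)) for an absolute constant C. -/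
set_option maxHeartbeats 2000000


open MeasureTheory ProbabilityTheory Real
open scoped BigOperators ENNReal

/-- The law of a single entry: `±1` with probability `s/(2m)` each, `0` otherwise. -/
noncomputable def sparseEntryLaw (m s : ℕ) : Measure ℝ :=
  ENNReal.ofReal ((s : ℝ) / (2 * m)) • Measure.dirac 1 +
    ENNReal.ofReal ((s : ℝ) / (2 * m)) • Measure.dirac (-1) +
    ENNReal.ofReal (1 - (s : ℝ) / m) • Measure.dirac 0


section AuxLemmasForStmt15

lemma aux_log_le_two_sqrt {x : ℝ} (hx : 0 ≤ x) : Real.log (1 + x) ≤ 2 * Real.sqrt x := by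
  have h1 : Real.log (1 + x) = 2 * Real.log (Real.sqrt (1 + x)) := by
    rw [Real.log_sqrt (by linarith)]; ring
  have h2 : Real.log (Real.sqrt (1 + x)) ≤ Real.sqrt (1 + x) - 1 :=
    Real.log_le_sub_one_of_pos (Real.sqrt_pos.2 (by linarith))
  have h3 : Real.sqrt (1 + x) ≤ 1 + Real.sqrt x := by
    rw [show (1 : ℝ) + Real.sqrt x = Real.sqrt ((1 + Real.sqrt x) ^ 2) from
      (Real.sqrt_sq (by positivity)).symm]
    apply Real.sqrt_le_sqrt
    nlinarith [Real.sq_sqrt hx, Real.sqrt_nonneg x]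
  linarith

lemma key_cosh {p w : ℝ} (hp0 : 0 < p) (hp1 : p ≤ 1) :
    1 - p + p * Real.cosh w ≤ Real.exp (6 * w ^ 2 / Real.log (1 + 1 / p)) := by
  set L := Real.log (1 + 1 / p) with hLdef
  have hinv : 1 ≤ 1 / p := by rw [le_div_iff₀ hp0]; linarith
  have hL2 : Real.log 2 ≤ L := Real.log_le_log (by norm_num) (by linarith)
  have hL0 : 0 < L := lt_of_lt_of_le (Real.log_pos (by norm_num)) hL2
  have hsqL : Real.sqrt p * L ≤ 2 := by
    have h := aux_log_le_two_sqrt (le_of_lt (by positivity : (0:ℝ) < 1 / p))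
    have hs : Real.sqrt (1 / p) = 1 / Real.sqrt p := by
      rw [one_div, Real.sqrt_inv, one_div]
    rw [hs] at h
    have hsp : 0 < Real.sqrt p := Real.sqrt_pos.2 hp0
    calc Real.sqrt p * L ≤ Real.sqrt p * (2 * (1 / Real.sqrt p)) := by
          apply mul_le_mul_of_nonneg_left _ hsp.le
          exact h
      _ = 2 := by field_simp
  have main : ∀ v : ℝ, 0 ≤ v → 1 - p + p * Real.cosh v ≤ Real.exp (6 * v ^ 2 / L) := by
    intro w hw
    rcases le_or_gt w (L / 2) with hcase | hcase
    · -- small w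
      have hcosh : Real.cosh w - 1 ≤ w ^ 2 / 2 * Real.exp w := by
        have he : Real.exp (w / 2) * Real.exp (-(w / 2)) = 1 := by
          rw [← Real.exp_add]; simp
        have he2 : Real.exp (w / 2) * Real.exp (w / 2) = Real.exp w := by
          rw [← Real.exp_add]; ring_nf
        have hd : Real.exp (w / 2) - Real.exp (-(w / 2)) ≤ Real.exp (w / 2) * w := by
          have h1 : 1 - Real.exp (-w) ≤ w := by
            have := Real.add_one_le_exp (-w); linarith
          have h2 : Real.exp (-(w/2)) = Real.exp (w/2) * Real.exp (-w) := by
            rw [← Real.exp_add]; ring_nf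
          rw [h2]
          calc Real.exp (w / 2) - Real.exp (w / 2) * Real.exp (-w)
              = Real.exp (w / 2) * (1 - Real.exp (-w)) := by ring
            _ ≤ Real.exp (w / 2) * w := by
                apply mul_le_mul_of_nonneg_left h1 (Real.exp_pos _).le
        have hdnn : 0 ≤ Real.exp (w / 2) - Real.exp (-(w / 2)) := by
          have := Real.exp_le_exp.2 (by linarith : -(w/2) ≤ w/2); linarith
        have hsq : (Real.exp (w / 2) - Real.exp (-(w / 2))) ^ 2 ≤ Real.exp w * w ^ 2 := by
          nlinarith [Real.exp_pos (w/2)]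
        have hid : Real.cosh w - 1 = (Real.exp (w / 2) - Real.exp (-(w / 2))) ^ 2 / 2 := by
          rw [Real.cosh_eq]
          have hw2 : Real.exp (-(w/2)) * Real.exp (-(w/2)) = Real.exp (-w) := by
            rw [← Real.exp_add]; ring_nf
          nlinarith [he, he2, hw2]
        rw [hid]; nlinarith
      have hpe : p * Real.exp w ≤ Real.sqrt (2 * p) := by
        have h1 : p * Real.exp w ≤ p * Real.exp (L / 2) := by
          apply mul_le_mul_of_nonneg_left (Real.exp_le_exp.2 hcase) hp0.le
        have hexpsq : Real.exp (L / 2) * Real.exp (L / 2) = Real.exp L := by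
          rw [← Real.exp_add]; congr 1; ring
        have h2 : (p * Real.exp (L / 2)) ^ 2 = p ^ 2 * (1 + 1 / p) := by
          have hEL : Real.exp L = 1 + 1 / p := by
            rw [hLdef, Real.exp_log (by positivity)]
          calc (p * Real.exp (L / 2)) ^ 2
              = p ^ 2 * (Real.exp (L/2) * Real.exp (L/2)) := by ring
            _ = p ^ 2 * (1 + 1 / p) := by rw [hexpsq, hEL]
        have h3 : p * Real.exp (L / 2) ≤ Real.sqrt (2 * p) := by
          have h4 : (p * Real.exp (L/2)) ^ 2 ≤ 2 * p := by
            rw [h2]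
            have : p ^ 2 * (1 + 1 / p) = p ^ 2 + p := by field_simp
            nlinarith
          nlinarith [Real.sq_sqrt (by positivity : (0:ℝ) ≤ 2 * p),
            Real.sqrt_nonneg (2 * p), Real.exp_pos (L/2),
            sq_nonneg (p * Real.exp (L/2) - Real.sqrt (2*p))]
        linarith
      have h2p : Real.sqrt (2 * p) * L ≤ 12 := by
        have hs2 : Real.sqrt 2 ≤ 2 := by
          nlinarith [Real.sq_sqrt (by norm_num : (0:ℝ) ≤ 2), Real.sqrt_nonneg (2:ℝ)]
        rw [Real.sqrt_mul (by norm_num : (0:ℝ) ≤ 2)]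
        nlinarith [Real.sqrt_nonneg p, Real.sqrt_nonneg (2:ℝ), hL0.le,
          mul_nonneg (Real.sqrt_nonneg p) hL0.le]
      have hmain : p * (Real.cosh w - 1) ≤ 6 * w ^ 2 / L := by
        rw [le_div_iff₀ hL0]
        have h1 : p * (Real.cosh w - 1) ≤ w ^ 2 / 2 * (p * Real.exp w) := by
          calc p * (Real.cosh w - 1) ≤ p * (w ^ 2 / 2 * Real.exp w) :=
                mul_le_mul_of_nonneg_left hcosh hp0.le
            _ = w ^ 2 / 2 * (p * Real.exp w) := by ring
        have h5 : w ^ 2 / 2 * (p * Real.exp w) * L ≤ w ^ 2 / 2 * Real.sqrt (2*p) * L := by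
          have h51 := mul_le_mul_of_nonneg_left hpe (by positivity : (0:ℝ) ≤ w ^ 2 / 2)
          exact mul_le_mul_of_nonneg_right h51 hL0.le
        have h6 : w ^ 2 / 2 * Real.sqrt (2*p) * L ≤ w ^ 2 / 2 * 12 := by
          calc w ^ 2 / 2 * Real.sqrt (2*p) * L = w ^ 2 / 2 * (Real.sqrt (2*p) * L) := by ring
            _ ≤ w ^ 2 / 2 * 12 := mul_le_mul_of_nonneg_left h2p (by positivity)
        have h8 : p * (Real.cosh w - 1) * L ≤ w ^ 2 / 2 * (p * Real.exp w) * L :=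
          mul_le_mul_of_nonneg_right h1 hL0.le
        linarith
      calc 1 - p + p * Real.cosh w = p * (Real.cosh w - 1) + 1 := by ring
        _ ≤ Real.exp (p * (Real.cosh w - 1)) := Real.add_one_le_exp _
        _ ≤ Real.exp (6 * w ^ 2 / L) := Real.exp_le_exp.2 hmain
    · -- large w
      have hcosh : Real.cosh w ≤ Real.exp w := by
        rw [Real.cosh_eq]
        have := Real.exp_le_exp.2 (by linarith : -w ≤ w)
        linarith
      have h1 : 1 - p + p * Real.cosh w ≤ 2 * Real.exp w := by
        have h2 : p * Real.cosh w ≤ Real.exp w := by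
          calc p * Real.cosh w ≤ 1 * Real.cosh w := by
                apply mul_le_mul_of_nonneg_right hp1
                have := Real.one_le_cosh w; linarith
            _ ≤ Real.exp w := by rw [one_mul]; exact hcosh
        have h3 : (1:ℝ) ≤ Real.exp w := by
          rw [show (1:ℝ) = Real.exp 0 from (Real.exp_zero).symm]
          exact Real.exp_le_exp.2 hw
        linarith
      have h4 : 2 * Real.exp w = Real.exp (w + Real.log 2) := by
        rw [Real.exp_add, Real.exp_log (by norm_num : (0:ℝ) < 2)]; ring
      have h5 : w + Real.log 2 ≤ 6 * w ^ 2 / L := by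
        rw [le_div_iff₀ hL0]
        have hlog2 : 0 < Real.log 2 := Real.log_pos (by norm_num)
        nlinarith [hcase, hL0, hL2]
      calc 1 - p + p * Real.cosh w ≤ 2 * Real.exp w := h1
        _ = Real.exp (w + Real.log 2) := h4
        _ ≤ Real.exp (6 * w ^ 2 / L) := Real.exp_le_exp.2 h5
  have := main |w| (abs_nonneg w)
  rwa [Real.cosh_abs, sq_abs] at this


lemma integrable_exp_lin_quad (b : ℝ) :
    Integrable (fun x : ℝ => Real.exp (b * x - x ^ 2 / 2)) := by
  have h : ∀ x : ℝ, Real.exp (b * x - x ^ 2 / 2)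
      = Real.exp (b ^ 2 / 2) * Real.exp (-(2⁻¹ : ℝ) * (x - b) ^ 2) := by
    intro x; rw [← Real.exp_add]; congr 1; ring
  simp_rw [h]
  exact ((integrable_exp_neg_mul_sq (by norm_num : (0:ℝ) < 2⁻¹)).comp_sub_right b).const_mul _

lemma gauss_shift (b : ℝ) :
    ∫ x : ℝ, Real.exp (b * x - x ^ 2 / 2)
      = Real.sqrt (2 * Real.pi) * Real.exp (b ^ 2 / 2) := by
  have h : ∀ x : ℝ, Real.exp (b * x - x ^ 2 / 2)
      = Real.exp (b ^ 2 / 2) * Real.exp (-(2⁻¹ : ℝ) * (x - b) ^ 2) := by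
    intro x; rw [← Real.exp_add]; congr 1; ring
  simp_rw [h]
  rw [integral_const_mul]
  rw [integral_sub_right_eq_self (fun x : ℝ => Real.exp (-(2⁻¹ : ℝ) * x ^ 2)) b]
  rw [integral_gaussian]
  rw [show Real.pi / 2⁻¹ = 2 * Real.pi by ring]
  ring

lemma gauss_quarter :
    ∫ x : ℝ, Real.exp (- x ^ 2 / 2) * Real.exp (x ^ 2 / 4)
      = Real.sqrt (2 * Real.pi) * Real.sqrt 2 := by
  have h : ∀ x : ℝ, Real.exp (- x ^ 2 / 2) * Real.exp (x ^ 2 / 4)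
      = Real.exp (-(4⁻¹ : ℝ) * x ^ 2) := by
    intro x; rw [← Real.exp_add]; congr 1; ring
  simp_rw [h]
  rw [integral_gaussian]
  rw [show Real.pi / 4⁻¹ = (2 * Real.pi) * 2 by ring]
  rw [Real.sqrt_mul (by positivity)]

lemma mgf_sparse {m s : ℕ} (hs : 1 ≤ s) (hsm : s ≤ m) (b : ℝ) :
    ∫ y, Real.exp (b * y) ∂(sparseEntryLaw m s)
      = 1 - (s : ℝ) / m + (s : ℝ) / m * Real.cosh b := by
  unfold sparseEntryLaw
  have hm : (0:ℝ) < m := by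
    have : (1:ℕ) ≤ m := le_trans hs hsm
    exact_mod_cast Nat.lt_of_lt_of_le Nat.zero_lt_one this
  have hsm' : (s:ℝ) / m ≤ 1 := by
    rw [div_le_one hm]; exact_mod_cast hsm
  have hint : ∀ (c : ℝ) (a : ℝ), Integrable (fun y => Real.exp (b * y))
      (ENNReal.ofReal c • Measure.dirac a) := by
    intro c a
    have h1 : Integrable (fun y => Real.exp (b * y)) (Measure.dirac a) := by
      constructor
      · exact (Real.measurable_exp.comp (measurable_const_mul b)).aestronglyMeasurable
      · simp [HasFiniteIntegral, lintegral_dirac]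
    exact h1.smul_measure ENNReal.ofReal_ne_top
  rw [integral_add_measure ((hint _ 1).add_measure (hint _ (-1))) (hint _ 0)]
  rw [integral_add_measure (hint _ 1) (hint _ (-1))]
  rw [integral_smul_measure, integral_smul_measure, integral_smul_measure]
  rw [integral_dirac, integral_dirac, integral_dirac]
  rw [ENNReal.toReal_ofReal (by positivity : (0:ℝ) ≤ (s:ℝ)/(2*m))]
  rw [ENNReal.toReal_ofReal (by linarith : (0:ℝ) ≤ 1 - (s:ℝ)/m)]
  rw [Real.cosh_eq]
  simp only [mul_one, mul_neg, mul_zero, Real.exp_zero, smul_eq_mul]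
  field_simp
  ring

end AuxLemmasForStmt15

theorem stmt15 :
    ∃ C : ℝ, 0 < C ∧
      ∀ (m s : ℕ), 1 ≤ s → s ≤ m →
      ∀ (Ω : Type) (_ : MeasurableSpace Ω) (μ : Measure Ω),
        IsProbabilityMeasure μ →
        ∀ Y : Fin m → Ω → ℝ,
          (∀ i, Measurable (Y i)) →
          iIndepFun Y μ →
          (∀ i, Measure.map (Y i) μ = sparseEntryLaw m s) →
          vpsi2 μ (fun ω => (show EuclideanSpace ℝ (Fin m) from WithLp.toLp 2 (fun i => Y i ω))) ≤
            C / Real.sqrt (Real.log (1 + (m : ℝ) / s)) := by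
  refine ⟨Real.sqrt 48, by positivity, ?_⟩
  intro m s hs hsm Ω mΩ μ hμ Y hYmeas hYindep hYlaw
  have hm1 : 1 ≤ m := le_trans hs hsm
  have hmpos : (0:ℝ) < m := by exact_mod_cast Nat.lt_of_lt_of_le Nat.zero_lt_one hm1
  have hspos : (0:ℝ) < s := by exact_mod_cast hs
  set p : ℝ := (s:ℝ)/m with hpdef
  have hp0 : 0 < p := by positivity
  have hp1 : p ≤ 1 := by rw [hpdef, div_le_one hmpos]; exact_mod_cast hsm
  set L : ℝ := Real.log (1 + (m:ℝ)/(s:ℝ)) with hLdef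
  have hms1 : (1:ℝ) ≤ (m:ℝ)/s := by
    rw [le_div_iff₀ hspos]; rw [one_mul]; exact_mod_cast hsm
  have hL0 : 0 < L := Real.log_pos (by linarith)
  have hLp : L = Real.log (1 + 1/p) := by rw [hLdef, hpdef, one_div_div]
  have hne : Nonempty {u : EuclideanSpace ℝ (Fin m) // ‖u‖ = 1} := by
    refine ⟨⟨EuclideanSpace.single (⟨0, hm1⟩ : Fin m) (1:ℝ), ?_⟩⟩
    rw [EuclideanSpace.norm_single]; norm_num
  unfold vpsi2
  apply ciSup_le
  rintro ⟨u, hu⟩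
  -- notation
  set X : Fin m → Ω → ℝ := fun i ω => Y i ω * u i with hXdef
  set Z : Ω → ℝ := fun ω => ∑ i, X i ω with hZdef
  have hinner : (fun ω => (inner ℝ (show EuclideanSpace ℝ (Fin m) from WithLp.toLp 2 (fun i => Y i ω)) u : ℝ))
      = Z := by
    funext ω
    simp only [hZdef, hXdef, PiLp.inner_apply, RCLike.inner_apply, conj_trivial, mul_comm]
  rw [hinner]
  unfold psi2
  have ht0 : (0:ℝ) < Real.sqrt 48 / Real.sqrt L := by positivity
  apply csInf_le ⟨0, fun t ht => ht.1.le⟩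
  refine ⟨ht0, ?_⟩
  -- constants
  set c : ℝ := L / 48 with hcdef
  set b : ℝ := Real.sqrt (L / 24) with hbdef
  have hb0 : 0 ≤ b := Real.sqrt_nonneg _
  have hb2 : b ^ 2 = L / 24 := Real.sq_sqrt (by positivity)
  have hexp_eq : ∀ z : ℝ, z ^ 2 / (Real.sqrt 48 / Real.sqrt L) ^ 2 = c * z ^ 2 := by
    intro z
    rw [div_pow, Real.sq_sqrt (by norm_num : (0:ℝ) ≤ 48), Real.sq_sqrt hL0.le, hcdef]
    field_simp
  simp_rw [hexp_eq]
  -- measurability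
  have hXmeas : ∀ i, Measurable (X i) := fun i => (hYmeas i).mul_const _
  have hZmeas : Measurable Z := by
    apply Finset.measurable_sum
    exact fun i _ => hXmeas i
  -- a.e. bound
  set M : ℝ := ∑ i, |u i| with hMdef
  have hae : ∀ i, ∀ᵐ ω ∂μ, |Y i ω| ≤ 1 := by
    intro i
    have hA : MeasurableSet {x : ℝ | 1 < |x|} :=
      measurableSet_lt measurable_const measurable_abs
    rw [ae_iff]
    have hset : {ω | ¬ |Y i ω| ≤ 1} = Y i ⁻¹' {x : ℝ | 1 < |x|} := by
      ext ω; simp [not_le]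
    rw [hset, ← Measure.map_apply (hYmeas i) hA, hYlaw i]
    unfold sparseEntryLaw
    simp only [Measure.coe_add, Pi.add_apply, Measure.smul_apply, smul_eq_mul]
    rw [Measure.dirac_apply' _ hA, Measure.dirac_apply' _ hA, Measure.dirac_apply' _ hA]
    have h1 : (1:ℝ) ∉ {x : ℝ | 1 < |x|} := by simp
    have h2 : (-1:ℝ) ∉ {x : ℝ | 1 < |x|} := by simp
    have h3 : (0:ℝ) ∉ {x : ℝ | 1 < |x|} := by norm_num
    rw [Set.indicator_of_notMem h1, Set.indicator_of_notMem h2, Set.indicator_of_notMem h3]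
    simp
  have hZb : ∀ᵐ ω ∂μ, |Z ω| ≤ M := by
    have hall : ∀ᵐ ω ∂μ, ∀ i, |Y i ω| ≤ 1 := (ae_all_iff).2 hae
    filter_upwards [hall] with ω hω
    calc |Z ω| ≤ ∑ i, |X i ω| := Finset.abs_sum_le_sum_abs _ _
      _ ≤ ∑ i, |u i| := by
          apply Finset.sum_le_sum
          intro i _
          rw [hXdef]
          simp only []
          rw [abs_mul]
          calc |Y i ω| * |u i| ≤ 1 * |u i| :=
                mul_le_mul_of_nonneg_right (hω i) (abs_nonneg _)
            _ = |u i| := one_mul _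
  -- mgf formula
  have hmgf : ∀ r : ℝ, mgf Z μ r = ∏ i, (1 - p + p * Real.cosh (r * u i)) := by
    intro r
    have hXindep : iIndepFun X μ := by
      have := hYindep.comp (fun i => fun y : ℝ => y * u i)
        (fun i => measurable_id.mul_const (u i))
      exact this
    have hZsum : Z = ∑ i, X i := by
      funext ω; rw [Finset.sum_apply]
    rw [hZsum, hXindep.mgf_sum hXmeas]
    apply Finset.prod_congr rfl
    intro i _
    rw [mgf]
    have h1 : (fun ω => Real.exp (r * X i ω)) = fun ω => Real.exp ((r * u i) * Y i ω) := by
      funext ω; rw [hXdef]; ring_nf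
    calc (∫ ω, Real.exp (r * X i ω) ∂μ)
        = ∫ ω, Real.exp ((r * u i) * Y i ω) ∂μ := by rw [h1]
      _ = ∫ y, Real.exp ((r * u i) * y) ∂(Measure.map (Y i) μ) := by
          rw [integral_map (hYmeas i).aemeasurable]
          exact (Real.continuous_exp.comp (continuous_const.mul continuous_id)).aestronglyMeasurable
      _ = 1 - p + p * Real.cosh (r * u i) := by
          rw [hYlaw i, mgf_sparse hs hsm]
  -- sum of squares
  have hsum : ∑ i, (u i) ^ 2 = 1 := by
    have h1 := hu
    rw [EuclideanSpace.norm_eq] at h1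
    have h2 : ∑ i, ‖u i‖ ^ 2 = 1 := by
      have := Real.sqrt_eq_one.1 h1
      exact this
    calc ∑ i, (u i) ^ 2 = ∑ i, ‖u i‖ ^ 2 := by
          apply Finset.sum_congr rfl; intro i _; rw [Real.norm_eq_abs, sq_abs]
      _ = 1 := h2
  -- mgf bound
  have hfactor : ∀ x : ℝ, mgf Z μ (b * x) ≤ Real.exp (x ^ 2 / 4) := by
    intro x
    rw [hmgf]
    have hterm : ∀ i : Fin m, (1 - p + p * Real.cosh (b * x * u i))
        ≤ Real.exp (6 * (b * x * u i) ^ 2 / L) := by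
      intro i
      have := key_cosh (w := b * x * u i) hp0 hp1
      rwa [← hLp] at this
    calc (∏ i, (1 - p + p * Real.cosh (b * x * u i)))
        ≤ ∏ i, Real.exp (6 * (b * x * u i) ^ 2 / L) := by
          apply Finset.prod_le_prod
          · intro i _
            have := Real.one_le_cosh (b * x * u i)
            nlinarith
          · intro i _; exact hterm i
      _ = Real.exp (∑ i, 6 * (b * x * u i) ^ 2 / L) := by rw [Real.exp_sum]
      _ = Real.exp (x ^ 2 / 4) := by
          congr 1
          have h3 : ∀ i : Fin m, 6 * (b * x * u i) ^ 2 / L = (6 * b ^ 2 * x ^ 2 / L) * (u i) ^ 2 := by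
            intro i; field_simp
          rw [Finset.sum_congr rfl fun i _ => h3 i, ← Finset.mul_sum, hsum, mul_one, hb2]
          field_simp
          ring
  -- Fubini setup
  set G : Ω → ℝ → ℝ := fun ω x => Real.exp (b * Z ω * x - x ^ 2 / 2) with hGdef
  have hGm : Measurable (Function.uncurry G) := by
    apply Real.measurable_exp.comp
    exact (((hZmeas.comp measurable_fst).const_mul b).mul measurable_snd).sub
      ((measurable_snd.pow_const 2).div_const 2)
  have hGmeas : AEStronglyMeasurable (Function.uncurry G) (μ.prod volume) :=
    hGm.aestronglyMeasurable
  have hGnorm : ∀ ω, (fun x => ‖G ω x‖) = fun x => G ω x := by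
    intro ω; funext x
    rw [Real.norm_eq_abs, abs_of_pos (Real.exp_pos _)]
  have hGval : ∀ ω, ∫ x, G ω x = Real.sqrt (2 * Real.pi) * Real.exp ((b * Z ω) ^ 2 / 2) := by
    intro ω
    have := gauss_shift (b * Z ω)
    simpa [hGdef] using this
  have hGint : Integrable (Function.uncurry G) (μ.prod volume) := by
    rw [integrable_prod_iff hGmeas]
    constructor
    · filter_upwards with ω
      exact integrable_exp_lin_quad (b * Z ω)
    · have heq : (fun ω => ∫ x, ‖Function.uncurry G (ω, x)‖)
          = fun ω => Real.sqrt (2 * Real.pi) * Real.exp ((b * Z ω) ^ 2 / 2) := by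
        funext ω
        have : (fun x => ‖Function.uncurry G (ω, x)‖) = fun x => G ω x := hGnorm ω
        rw [this, hGval ω]
      rw [heq]
      apply Integrable.mono' (integrable_const (Real.sqrt (2 * Real.pi)
        * Real.exp ((b * M) ^ 2 / 2)))
      · exact (((((hZmeas.const_mul b).pow_const 2).div_const 2).exp).const_mul _).aestronglyMeasurable
      · filter_upwards [hZb] with ω hω
        rw [Real.norm_eq_abs, abs_of_pos (by positivity)]
        apply mul_le_mul_of_nonneg_left _ (Real.sqrt_nonneg _)
        apply Real.exp_le_exp.2
        have hZ2 : Z ω ^ 2 ≤ M ^ 2 :=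
          sq_le_sq' (by linarith [(abs_le.1 hω).1]) ((abs_le.1 hω).2)
        have hb2' : (b * Z ω) ^ 2 ≤ (b * M) ^ 2 := by
          nlinarith [mul_nonneg (sq_nonneg b) (sub_nonneg.2 hZ2)]
        linarith
  -- final chain
  have hinner_eq : ∀ x : ℝ, ∫ ω, G ω x ∂μ = Real.exp (- x ^ 2 / 2) * mgf Z μ (b * x) := by
    intro x
    rw [mgf, ← integral_const_mul]
    congr 1
    funext ω
    rw [hGdef]
    simp only []
    rw [← Real.exp_add]
    congr 1
    ring
  have hswap : ∫ ω, (∫ x, G ω x) ∂μ = ∫ x, ∫ ω, G ω x ∂μ :=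
    integral_integral_swap hGint
  have hstep1 : ∫ ω, Real.exp (c * Z ω ^ 2) ∂μ
      = (Real.sqrt (2 * Real.pi))⁻¹ * ∫ ω, (∫ x, G ω x) ∂μ := by
    rw [← integral_const_mul]
    congr 1
    funext ω
    rw [hGval ω, ← mul_assoc, inv_mul_cancel₀ (ne_of_gt (by positivity)), one_mul]
    congr 1
    rw [mul_pow, hb2, hcdef]
    ring
  have hint_left : Integrable (fun x => ∫ ω, G ω x ∂μ) volume := hGint.integral_prod_right
  have hrhs_eq : (fun x : ℝ => Real.exp (- x ^ 2 / 2) * Real.exp (x ^ 2 / 4))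
      = fun x : ℝ => Real.exp (-(4⁻¹ : ℝ) * x ^ 2) := by
    funext x; rw [← Real.exp_add]; congr 1; ring
  have hint_right : Integrable (fun x : ℝ => Real.exp (- x ^ 2 / 2) * Real.exp (x ^ 2 / 4)) := by
    rw [hrhs_eq]; exact integrable_exp_neg_mul_sq (by norm_num)
  have hmono : (∫ x, ∫ ω, G ω x ∂μ) ≤ ∫ x : ℝ, Real.exp (- x ^ 2 / 2) * Real.exp (x ^ 2 / 4) := by
    apply integral_mono hint_left hint_right
    intro x
    dsimp only
    rw [hinner_eq x]
    exact mul_le_mul_of_nonneg_left (hfactor x) (Real.exp_pos _).le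
  calc ∫ ω, Real.exp (c * Z ω ^ 2) ∂μ
      = (Real.sqrt (2 * Real.pi))⁻¹ * ∫ ω, (∫ x, G ω x) ∂μ := hstep1
    _ = (Real.sqrt (2 * Real.pi))⁻¹ * ∫ x, ∫ ω, G ω x ∂μ := by rw [hswap]
    _ ≤ (Real.sqrt (2 * Real.pi))⁻¹ * ∫ x : ℝ, Real.exp (- x ^ 2 / 2) * Real.exp (x ^ 2 / 4) :=
        mul_le_mul_of_nonneg_left hmono (by positivity)
    _ = Real.sqrt 2 := by
        rw [gauss_quarter, ← mul_assoc, inv_mul_cancel₀ (ne_of_gt (by positivity)), one_mul]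
    _ ≤ 2 := by
        nlinarith [Real.sq_sqrt (by norm_num : (0:ℝ) ≤ 2), Real.sqrt_nonneg (2:ℝ)]
end
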